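/- For every real σ with 1/2 < σ < 3/2 and every real X > 0: (1/2π) ∫_{−∞}^{∞} Γ(1/2 − σ + iy) · X^{1/2 − σ + iy} dy = e^{−1/X} − 1, where X^{1/2−σ+iy} = e^{(1/2−σ+iy) log X}. In particular the integral converges absolutely and is independent of σ in this range. -/

import Mathlib

set_option maxHeartbeats 1000000

open Complex Filter MeasureTheory Set Topology

noncomputable def fME (t : ℝ) : ℂ := Real.exp (-t) - 1

lemma fME_eq (t : ℝ) : fME t = Complex.exp (-(t : ℂ)) - 1 := by
  rw [fME, Complex.ofReal_exp, Complex.ofReal_neg]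

lemma fME_continuous : Continuous fME := by
  unfold fME; fun_prop

lemma fME_norm_le_one {t : ℝ} (ht : 0 ≤ t) : ‖fME t‖ ≤ 1 := by
  rw [fME]
  rw [show ((Real.exp (-t) : ℝ) : ℂ) - 1 = ((Real.exp (-t) - 1 : ℝ) : ℂ) by push_cast; ring]
  rw [Complex.norm_real, Real.norm_eq_abs, abs_le]
  constructor
  · have := Real.exp_pos (-t); linarith
  · have : Real.exp (-t) ≤ 1 := Real.exp_le_one_iff.mpr (by linarith)
    linarith

lemma fME_norm_le {t : ℝ} (ht : 0 ≤ t) : ‖fME t‖ ≤ t := by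
  rw [fME]
  rw [show ((Real.exp (-t) : ℝ) : ℂ) - 1 = ((Real.exp (-t) - 1 : ℝ) : ℂ) by push_cast; ring]
  rw [Complex.norm_real, Real.norm_eq_abs, abs_le]
  have h1 : Real.exp (-t) ≤ 1 := Real.exp_le_one_iff.mpr (by linarith)
  have h2 : -t + 1 ≤ Real.exp (-t) := by
    have := Real.add_one_le_exp (-t); linarith
  constructor <;> linarith

/-- The integrand of the Mellin transform of `fME` is integrable for `-1 < Re s < 0`. -/
lemma mellinConv_fME {s : ℂ} (h1 : -1 < s.re) (h2 : s.re < 0) :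
    MellinConvergent fME s := by
  have hmeas : AEStronglyMeasurable (fun t : ℝ => (t : ℂ) ^ (s - 1) • fME t)
      (volume.restrict (Ioi (0:ℝ))) := by
    apply ContinuousOn.aestronglyMeasurable _ measurableSet_Ioi
    intro t ht
    exact ((continuousAt_ofReal_cpow_const t (s - 1)
      (Or.inr (ne_of_gt ht))).smul fME_continuous.continuousAt).continuousWithinAt
  have hnorm : ∀ t : ℝ, 0 < t → ‖(t : ℂ) ^ (s - 1) • fME t‖ = t ^ (s.re - 1) * ‖fME t‖ := by
    intro t ht
    rw [norm_smul, Complex.norm_cpow_eq_rpow_re_of_pos ht,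
      Complex.sub_re, Complex.one_re]
  have hIoc : IntegrableOn (fun t : ℝ => (t : ℂ) ^ (s - 1) • fME t) (Ioc (0:ℝ) 1) := by
    have hbound : IntegrableOn (fun t : ℝ => t ^ s.re) (Ioc (0:ℝ) 1) := by
      rw [← intervalIntegrable_iff_integrableOn_Ioc_of_le zero_le_one]
      exact intervalIntegral.intervalIntegrable_rpow' h1
    refine Integrable.mono' hbound (hmeas.mono_measure
      (Measure.restrict_mono Ioc_subset_Ioi_self le_rfl)) ?_
    rw [ae_restrict_iff' measurableSet_Ioc]
    filter_upwards with t ht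
    rw [hnorm t ht.1]
    calc t ^ (s.re - 1) * ‖fME t‖ ≤ t ^ (s.re - 1) * t := by
          gcongr
          · exact Real.rpow_nonneg ht.1.le _
          · exact fME_norm_le ht.1.le
      _ = t ^ s.re := by
          rw [← Real.rpow_add_one (ne_of_gt ht.1), sub_add_cancel]
  have hIoi : IntegrableOn (fun t : ℝ => (t : ℂ) ^ (s - 1) • fME t) (Ioi (1:ℝ)) := by
    have hbound : IntegrableOn (fun t : ℝ => t ^ (s.re - 1)) (Ioi (1:ℝ)) :=
      integrableOn_Ioi_rpow_of_lt (by linarith) zero_lt_one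
    refine Integrable.mono' hbound (hmeas.mono_measure
      (Measure.restrict_mono (Ioi_subset_Ioi zero_le_one) le_rfl)) ?_
    rw [ae_restrict_iff' measurableSet_Ioi]
    filter_upwards with t ht
    rw [hnorm t (lt_trans zero_lt_one ht)]
    calc t ^ (s.re - 1) * ‖fME t‖ ≤ t ^ (s.re - 1) * 1 := by
          gcongr
          · exact Real.rpow_nonneg (lt_trans zero_lt_one ht).le _
          · exact fME_norm_le_one (lt_trans zero_lt_one ht).le
      _ = t ^ (s.re - 1) := mul_one _
  have := hIoc.union hIoi
  rwa [Ioc_union_Ioi_eq_Ioi zero_le_one] at this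

/-- The Mellin transform of `fME` is `Γ` in the strip `-1 < Re s < 0`. -/
lemma mellin_fME {s : ℂ} (h1 : -1 < s.re) (h2 : s.re < 0) :
    mellin fME s = Complex.Gamma s := by
  have hs0 : s ≠ 0 := fun h => by rw [h] at h2; simp at h2
  set F : ℝ → ℂ := fun t => (t : ℂ) ^ s / s * (Complex.exp (-(t : ℂ)) - 1) with hF
  have hA : IntegrableOn (fun t : ℝ => (t : ℂ) ^ (s - 1) * (Complex.exp (-(t:ℂ)) - 1))
      (Ioi (0:ℝ)) := by
    have := mellinConv_fME h1 h2
    rw [MellinConvergent] at this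
    refine this.congr_fun (fun t ht => ?_) measurableSet_Ioi
    beta_reduce
    rw [smul_eq_mul, fME_eq]
  have hGam : Complex.Gamma (s + 1) = ∫ t in Ioi (0:ℝ),
      ((Real.exp (-t) : ℝ) : ℂ) * (t : ℂ) ^ s := by
    rw [Complex.Gamma_eq_integral
      (by rw [Complex.add_re, Complex.one_re]; linarith), Complex.GammaIntegral]
    refine setIntegral_congr_fun measurableSet_Ioi (fun t ht => ?_)
    rw [add_sub_cancel_right]
  have hB : IntegrableOn (fun t : ℝ => ((Real.exp (-t) : ℝ) : ℂ) * (t : ℂ) ^ s)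
      (Ioi (0:ℝ)) := by
    have := Complex.GammaIntegral_convergent (s := s + 1)
      (by rw [Complex.add_re, Complex.one_re]; linarith)
    refine this.congr_fun (fun t ht => ?_) measurableSet_Ioi
    rw [add_sub_cancel_right]
  have hB' : IntegrableOn (fun t : ℝ => (t : ℂ) ^ s / s * (-Complex.exp (-(t:ℂ))))
      (Ioi (0:ℝ)) := by
    have heq : (fun t : ℝ => (t : ℂ) ^ s / s * (-Complex.exp (-(t:ℂ)))) =
        fun t : ℝ => (-1/s) * (((Real.exp (-t) : ℝ) : ℂ) * (t : ℂ) ^ s) := by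
      funext t
      rw [Complex.ofReal_exp, Complex.ofReal_neg]
      ring
    rw [heq]
    exact hB.const_mul _
  have hderiv : ∀ t ∈ Ioi (0:ℝ), HasDerivAt F
      ((t : ℂ) ^ (s - 1) * (Complex.exp (-(t : ℂ)) - 1) +
        (t : ℂ) ^ s / s * (-Complex.exp (-(t : ℂ)))) t := by
    intro t ht
    have hd1 : HasDerivAt (fun u : ℝ => (u : ℂ) ^ s / s) ((t : ℂ) ^ (s - 1)) t := by
      have hne : s - 1 ≠ -1 := fun h => hs0 (by linear_combination h)
      have := hasDerivAt_ofReal_cpow_const' (ne_of_gt ht) hne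
      have heq : s - 1 + 1 = s := by ring
      rw [heq] at this
      exact this
    have hd2 : HasDerivAt (fun u : ℝ => Complex.exp (-(u : ℂ)) - 1)
        (-Complex.exp (-(t : ℂ))) t := by
      have h0 : HasDerivAt (fun u : ℝ => -(u : ℂ)) (-1) t := by
        exact ((hasDerivAt_id t).ofReal_comp.neg).congr_deriv (by simp)
      have h3 := (h0.cexp).sub_const 1
      exact h3.congr_deriv (by ring)
    exact hd1.mul hd2
  have hF0 : F 0 = 0 := by simp [hF]
  have hcont : ContinuousWithinAt F (Ici 0) 0 := by
    rw [ContinuousWithinAt, hF0]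
    apply squeeze_zero_norm' (a := fun t : ℝ => t ^ (s.re + 1) / ‖s‖)
    · filter_upwards [self_mem_nhdsWithin] with t (ht : t ∈ Ici (0:ℝ))
      rcases eq_or_lt_of_le (mem_Ici.mp ht) with h | h
      · rw [← h, hF0]
        simp only [norm_zero]
        positivity
      · have hnorm : ‖F t‖ = t ^ s.re / ‖s‖ * ‖Complex.exp (-(t:ℂ)) - 1‖ := by
          rw [hF, norm_mul, norm_div, 
            Complex.norm_cpow_eq_rpow_re_of_pos h]
        rw [hnorm]
        calc t ^ s.re / ‖s‖ * ‖Complex.exp (-(t:ℂ)) - 1‖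
            ≤ t ^ s.re / ‖s‖ * t :=
              mul_le_mul_of_nonneg_left (by rw [← fME_eq]; exact fME_norm_le h.le)
                (div_nonneg (Real.rpow_nonneg h.le _) (norm_nonneg _))
          _ = t ^ (s.re + 1) / ‖s‖ := by
              rw [div_mul_eq_mul_div, ← Real.rpow_add_one (ne_of_gt h)]
    · have hc : ContinuousWithinAt (fun t : ℝ => t ^ (s.re + 1) / ‖s‖) (Ici 0) 0 :=
        ContinuousWithinAt.div_const
          (Real.continuousAt_rpow_const 0 (s.re + 1)
            (Or.inr (by linarith))).continuousWithinAt _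
      have h0 : (0:ℝ) ^ (s.re + 1) / ‖s‖ = 0 := by
        rw [Real.zero_rpow (by linarith : (0:ℝ) < s.re + 1).ne', zero_div]
      rw [ContinuousWithinAt] at hc
      rwa [h0] at hc
  have htop : Tendsto F atTop (𝓝 0) := by
    apply squeeze_zero_norm' (a := fun t : ℝ => t ^ s.re / ‖s‖)
    · filter_upwards [eventually_gt_atTop (0:ℝ)] with t ht
      have hnorm : ‖F t‖ = t ^ s.re / ‖s‖ * ‖Complex.exp (-(t:ℂ)) - 1‖ := by
        rw [hF, norm_mul, norm_div, 
          Complex.norm_cpow_eq_rpow_re_of_pos ht]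
      rw [hnorm]
      calc t ^ s.re / ‖s‖ * ‖Complex.exp (-(t:ℂ)) - 1‖
          ≤ t ^ s.re / ‖s‖ * 1 :=
            mul_le_mul_of_nonneg_left (by rw [← fME_eq]; exact fME_norm_le_one ht.le)
              (div_nonneg (Real.rpow_nonneg ht.le _) (norm_nonneg _))
        _ = t ^ s.re / ‖s‖ := mul_one _
    · have hr : Tendsto (fun t : ℝ => t ^ s.re) atTop (𝓝 0) := by
        have := tendsto_rpow_neg_atTop (y := -s.re) (by linarith)
        simpa using this
      simpa using hr.div_const (‖s‖)
  have hFTC := integral_Ioi_of_hasDerivAt_of_tendsto hcont hderiv (hA.add hB') htop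
  rw [hF0, sub_zero, integral_add hA hB'] at hFTC
  have hintB : ∫ t in Ioi (0:ℝ), (t : ℂ) ^ s / s * (-Complex.exp (-(t:ℂ)))
      = -(Complex.Gamma (s + 1) / s) := by
    calc ∫ t in Ioi (0:ℝ), (t : ℂ) ^ s / s * (-Complex.exp (-(t:ℂ)))
        = ∫ t in Ioi (0:ℝ), (-1/s) * (((Real.exp (-t) : ℝ) : ℂ) * (t : ℂ) ^ s) := by
          refine setIntegral_congr_fun measurableSet_Ioi (fun t ht => ?_)
          rw [Complex.ofReal_exp, Complex.ofReal_neg]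
          ring
      _ = (-1/s) * ∫ t in Ioi (0:ℝ), ((Real.exp (-t) : ℝ) : ℂ) * (t : ℂ) ^ s :=
          integral_const_mul _ _
      _ = -(Complex.Gamma (s + 1) / s) := by rw [← hGam]; ring
  rw [hintB, add_neg_eq_zero] at hFTC
  have hmell : mellin fME s = ∫ t in Ioi (0:ℝ),
      (t : ℂ) ^ (s - 1) * (Complex.exp (-(t:ℂ)) - 1) := by
    refine setIntegral_congr_fun measurableSet_Ioi (fun t ht => ?_)
    rw [smul_eq_mul, fME_eq]
  rw [hmell, hFTC, Complex.Gamma_add_one s hs0, mul_div_cancel_left₀ _ hs0]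

/-- `|Γ z| ≤ Γ (Re z)` for `Re z > 0`. -/
lemma abs_Gamma_le {z : ℂ} (hz : 0 < z.re) :
    ‖Complex.Gamma z‖ ≤ Real.Gamma z.re := by
  rw [Complex.Gamma_eq_integral hz, Real.Gamma_eq_integral hz, Complex.GammaIntegral]
  refine norm_integral_le_of_norm_le (Real.GammaIntegral_convergent hz) ?_
  rw [ae_restrict_iff' measurableSet_Ioi]
  filter_upwards with t ht
  rw [norm_mul, Complex.norm_real, Real.norm_eq_abs, abs_of_pos (Real.exp_pos _),
    Complex.norm_cpow_eq_rpow_re_of_pos ht, Complex.sub_re,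
    Complex.one_re]

/-- `Γ` is integrable on vertical lines `Re = σ'` for `-1 < σ' < 0`. -/
lemma vertGamma {σ' : ℝ} (h1 : -1 < σ') (h2 : σ' < 0) :
    Integrable (fun y : ℝ => Complex.Gamma (σ' + y * I)) := by
  have hb : ∀ y : ℝ, (σ' + y * I : ℂ) ≠ 0 ∧ (σ' + y * I + 1 : ℂ) ≠ 0 := by
    intro y
    constructor
    · intro h
      have := congrArg Complex.re h
      simp at this
      linarith
    · intro h
      have := congrArg Complex.re h
      simp at this
      linarith
  have hrec : ∀ y : ℝ, Complex.Gamma (σ' + y * I) =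
      Complex.Gamma (σ' + y * I + 2) / ((σ' + y * I) * (σ' + y * I + 1)) := by
    intro y
    set w : ℂ := σ' + y * I
    have e1 : Complex.Gamma (w + 1) = w * Complex.Gamma w :=
      Complex.Gamma_add_one w (hb y).1
    have e2 : Complex.Gamma (w + 2) = (w + 1) * Complex.Gamma (w + 1) := by
      have := Complex.Gamma_add_one (w + 1) (hb y).2
      rw [show w + 1 + 1 = w + 2 by ring] at this
      exact this
    rw [e2, e1]
    rw [eq_div_iff (mul_ne_zero (hb y).1 (hb y).2)]
    ring
  set b : ℝ := min (-σ') (1 + σ') with hbdef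
  have hbpos : 0 < b := by
    rw [hbdef]; exact lt_min (by linarith) (by linarith)
  set c : ℝ := min (b ^ 2) 1 with hcdef
  have hcpos : 0 < c := lt_min (by positivity) one_pos
  set K : ℝ := 2 * Real.Gamma (σ' + 2) / c with hK
  have hbound : ∀ y : ℝ, ‖Complex.Gamma (σ' + y * I)‖ ≤ K * (1 + y ^ 2)⁻¹ := by
    intro y
    rw [hrec y, norm_div, norm_mul]
    set A : ℝ := ‖(σ' + y * I : ℂ)‖ with hAdef
    set B : ℝ := ‖(σ' + y * I + 1 : ℂ)‖ with hBdef
    have hre2 : (σ' + y * I + 2 : ℂ).re = σ' + 2 := by simp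
    have hnum : ‖Complex.Gamma (σ' + y * I + 2)‖ ≤ Real.Gamma (σ' + 2) := by
      have := abs_Gamma_le (z := (σ' + y * I + 2 : ℂ)) (by rw [hre2]; linarith)
      rwa [hre2] at this
    have hA_b : b ≤ A := by
      have h := Complex.abs_re_le_norm (σ' + y * I)
      have hre : (σ' + y * I : ℂ).re = σ' := by simp
      rw [hre] at h
      have : -σ' ≤ |σ'| := neg_le_abs σ'
      calc b ≤ -σ' := min_le_left _ _
        _ ≤ |σ'| := neg_le_abs σ'
        _ ≤ A := h
    have hA_y : |y| ≤ A := by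
      have h := Complex.abs_im_le_norm (σ' + y * I)
      have him : (σ' + y * I : ℂ).im = y := by simp
      rwa [him] at h
    have hB_b : b ≤ B := by
      have h := Complex.abs_re_le_norm (σ' + y * I + 1)
      have hre : (σ' + y * I + 1 : ℂ).re = σ' + 1 := by simp
      rw [hre] at h
      calc b ≤ 1 + σ' := min_le_right _ _
        _ ≤ |σ' + 1| := by rw [abs_of_pos (by linarith : (0:ℝ) < σ' + 1)]; linarith
        _ ≤ B := h
    have hB_y : |y| ≤ B := by
      have h := Complex.abs_im_le_norm (σ' + y * I + 1)
      have him : (σ' + y * I + 1 : ℂ).im = y := by simp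
      rwa [him] at h
    have hApos : 0 < A := lt_of_lt_of_le hbpos hA_b
    have hBpos : 0 < B := lt_of_lt_of_le hbpos hB_b
    have hyy : |y| * |y| = y ^ 2 := by rw [abs_mul_abs_self]; ring
    have hprod : c / 2 * (1 + y ^ 2) ≤ A * B := by
      have p1 : b * b ≤ A * B := mul_le_mul hA_b hB_b hbpos.le hApos.le
      have p2 : |y| * |y| ≤ A * B := mul_le_mul hA_y hB_y (abs_nonneg y) hApos.le
      have hc1 : c ≤ b ^ 2 := min_le_left _ _
      have hc2 : c ≤ 1 := min_le_right _ _
      nlinarith [sq_nonneg y, hcpos.le]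
    have hGampos : 0 ≤ Real.Gamma (σ' + 2) :=
      (Real.Gamma_pos_of_pos (by linarith)).le
    calc ‖Complex.Gamma (σ' + y * I + 2)‖ / (A * B)
        ≤ Real.Gamma (σ' + 2) / (c / 2 * (1 + y ^ 2)) := by
          apply div_le_div₀ hGampos hnum (by nlinarith [sq_nonneg y]) hprod
      _ = K * (1 + y ^ 2)⁻¹ := by
          rw [hK]
          have : (1 : ℝ) + y ^ 2 > 0 := by nlinarith [sq_nonneg y]
          field_simp
  have hmeas : Continuous (fun y : ℝ => Complex.Gamma (σ' + y * I)) := by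
    rw [continuous_iff_continuousAt]
    intro y
    have hmap : Continuous (fun y : ℝ => (σ' : ℂ) + y * I) := by fun_prop
    apply ContinuousAt.comp _ hmap.continuousAt
    apply (Complex.differentiableAt_Gamma _ ?_).continuousAt
    intro m h
    have hre := congrArg Complex.re h
    simp at hre
    rcases Nat.eq_zero_or_pos m with hm | hm
    · rw [hm] at hre; simp at hre; linarith
    · have : (1:ℝ) ≤ (m:ℝ) := by exact_mod_cast hm
      linarith
  refine Integrable.mono' ((integrable_inv_one_add_sq).const_mul K)
    hmeas.aestronglyMeasurable ?_
  filter_upwards with y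
  simpa using hbound y

/-- Mellin inversion: for `1/2 < σ < 3/2` and `X > 0`,
`(1/2π) ∫_{-∞}^{∞} Γ(1/2-σ+iy) X^{1/2-σ+iy} dy = e^{-1/X} - 1`,
and the integral converges absolutely. -/
theorem gamma_mellin_inversion (σ X : ℝ) (hσ1 : 1 / 2 < σ) (hσ2 : σ < 3 / 2) (hX : 0 < X) :
    Integrable (fun y : ℝ =>
        Complex.Gamma (1/2 - σ + y * I) * (X : ℂ) ^ ((1/2 : ℂ) - σ + y * I)) ∧
      (1 / (2 * Real.pi) : ℂ) *
          ∫ y : ℝ, Complex.Gamma (1/2 - σ + y * I) * (X : ℂ) ^ ((1/2 : ℂ) - σ + y * I) =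
        ((Real.exp (-1 / X) - 1 : ℝ) : ℂ) := by
  have hσ'1 : -1 < 1/2 - σ := by linarith
  have hσ'2 : 1/2 - σ < 0 := by linarith
  have hcast : ∀ y : ℝ, ((1/2 - σ : ℝ) : ℂ) + y * I = 1/2 - σ + y * I := by
    intro y; push_cast; ring
  have hcast' : ∀ y : ℝ, ((1/2 - σ : ℝ) : ℂ) + y * I = (1/2 : ℂ) - σ + y * I := by
    intro y; push_cast; ring
  have hGammaInt : Integrable (fun y : ℝ => Complex.Gamma (((1/2 - σ : ℝ) : ℂ) + y * I)) :=
    vertGamma hσ'1 hσ'2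
  have hXne : (X : ℂ) ≠ 0 := by
    simp only [ne_eq, Complex.ofReal_eq_zero]; exact hX.ne'
  have hXc : Continuous (fun y : ℝ => (X : ℂ) ^ ((1/2 : ℂ) - σ + y * I)) := by
    apply Continuous.const_cpow (by fun_prop) (Or.inl hXne)
  have hXnorm : ∀ y : ℝ, ‖(X : ℂ) ^ ((1/2 : ℂ) - σ + y * I)‖ = X ^ (1/2 - σ : ℝ) := by
    intro y
    rw [Complex.norm_cpow_eq_rpow_re_of_pos hX]
    congr 1
    simp
  have hInt : Integrable (fun y : ℝ =>
      Complex.Gamma (1/2 - σ + y * I) * (X : ℂ) ^ ((1/2 : ℂ) - σ + y * I)) := by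
    have h0 := hGammaInt.bdd_mul (f := fun y : ℝ => (X : ℂ) ^ ((1/2 : ℂ) - σ + y * I))
      (c := X ^ (1/2 - σ : ℝ)) hXc.aestronglyMeasurable
      (Filter.Eventually.of_forall fun y => (hXnorm y).le)
    refine h0.congr (Filter.Eventually.of_forall fun y => ?_)
    simp only [hcast]
    ring
  refine ⟨hInt, ?_⟩
  -- Mellin inversion
  have hre : ((1/2 - σ : ℝ) : ℂ).re = 1/2 - σ := Complex.ofReal_re _
  have hmc : MellinConvergent fME ((1/2 - σ : ℝ) : ℂ) :=
    mellinConv_fME (by rw [hre]; exact hσ'1) (by rw [hre]; exact hσ'2)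
  have hkey : ∀ y : ℝ, mellin fME (((1/2 - σ : ℝ) : ℂ) + y * I) =
      Complex.Gamma (((1/2 - σ : ℝ) : ℂ) + y * I) := by
    intro y
    apply mellin_fME <;> simp [Complex.add_re] <;> linarith
  have hvert : Complex.VerticalIntegrable (mellin fME) (1/2 - σ) :=
    hGammaInt.congr (Filter.Eventually.of_forall fun y => (hkey y).symm)
  have hinv := mellinInv_mellin_eq (1/2 - σ) fME (inv_pos.mpr hX) hmc hvert
    fME_continuous.continuousAt
  rw [mellinInv] at hinv
  have harg : (X : ℂ).arg ≠ Real.pi := by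
    rw [Complex.arg_ofReal_of_nonneg hX.le]
    exact Ne.symm Real.pi_ne_zero
  have hint : (fun y : ℝ =>
        ((X⁻¹ : ℝ) : ℂ) ^ (-(((1/2 - σ : ℝ) : ℂ) + y * I)) • mellin fME (((1/2 - σ : ℝ) : ℂ) + y * I))
      = fun y : ℝ => Complex.Gamma (1/2 - σ + y * I) * (X : ℂ) ^ ((1/2 : ℂ) - σ + y * I) := by
    funext y
    rw [smul_eq_mul, hkey y, Complex.ofReal_inv, inv_cpow _ _ harg, ← Complex.cpow_neg,
      neg_neg]
    simp only [hcast]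
    ring
  rw [hint] at hinv
  have hsm : ((1 / (2 * Real.pi) : ℂ)) = ((1 / (2 * Real.pi) : ℝ) : ℂ) := by
    push_cast; ring
  rw [hsm, ← Complex.real_smul, hinv, fME]
  rw [show (-1 / X : ℝ) = -X⁻¹ by rw [neg_div, one_div]]
  push_cast
  ring
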